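/- Let s be a nonzero integer, m an integer, and n ≥ 2. Then the Diophantine equation (1/x_1 + ⋯ + 1/x_n) − s/(x_1·x_2⋯x_n) = m has infinitely many solutions in nonzero integers (x_1, …, x_n) if and only if one of the following holds: (i) |m| ≤ n − 2 (with s arbitrary); (ii) m = n − 1 and s = 1; (iii) m = −(n − 1) and s = (−1)^{n−1}. -/

import Mathlib

open Finset

def sol (n : ℕ) (s m : ℤ) : Set (Fin n → ℤ) :=
  {x | (∀ i, x i ≠ 0) ∧ (∑ i, ((x i : ℚ))⁻¹) - (s : ℚ) / (∏ i, (x i : ℚ)) = (m : ℚ)}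

lemma mem_cons_one {n : ℕ} {s m : ℤ} {y : Fin n → ℤ} (hy : y ∈ sol n s m) :
    Fin.cons (α := fun _ => ℤ) 1 y ∈ sol (n+1) s (m+1) := by
  obtain ⟨h0, he⟩ := hy
  refine ⟨fun i => Fin.cases (by simp) (by simp [h0]) i, ?_⟩
  rw [Fin.sum_univ_succ, Fin.prod_univ_succ]
  push_cast
  simp only [Fin.cons_succ, Fin.cons_zero]
  norm_num
  linarith [he]

lemma mem_cons_neg {n : ℕ} {s m : ℤ} {y : Fin n → ℤ} (hy : y ∈ sol n s m) :
    Fin.cons (α := fun _ => ℤ) (-1) y ∈ sol (n+1) (-s) (m-1) := by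
  obtain ⟨h0, he⟩ := hy
  refine ⟨fun i => Fin.cases (by simp) (by simp [h0]) i, ?_⟩
  rw [Fin.sum_univ_succ, Fin.prod_univ_succ]
  simp only [Fin.cons_succ, Fin.cons_zero]
  push_cast
  rw [show ((-1:ℚ))⁻¹ = -1 by norm_num, neg_one_mul, neg_div_neg_eq]
  linarith [he]

lemma sol_two_infinite (s : ℤ) (hs : s ≠ 0) : (sol 2 s 0).Infinite := by
  refine Set.infinite_of_injective_forall_mem
    (f := fun t : ℕ => ![(t : ℤ) + 1 + |s|, s - ((t : ℤ) + 1 + |s|)]) ?_ ?_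
  · intro a b hab
    have := congrFun hab 0
    simp at this
    omega
  · intro t
    have ha : (t : ℤ) + 1 + |s| ≠ 0 := by positivity
    have hb : s - ((t : ℤ) + 1 + |s|) ≠ 0 := by
      have := abs_nonneg s
      have := le_abs_self s
      omega
    refine ⟨fun i => by fin_cases i <;> simp [ha, hb], ?_⟩
    rw [Fin.sum_univ_two, Fin.prod_univ_two]
    simp only [Matrix.cons_val_zero, Matrix.cons_val_one, Matrix.head_cons]
    have ha' : (((t : ℤ) + 1 + |s| : ℤ) : ℚ) ≠ 0 := Int.cast_ne_zero.mpr ha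
    have hb' : (((s - ((t : ℤ) + 1 + |s|)) : ℤ) : ℚ) ≠ 0 := Int.cast_ne_zero.mpr hb
    push_cast at ha' hb' ⊢
    field_simp
    ring

lemma aux3 (s a : ℤ) (ha : a ≠ 0) (hb : 1 - a ≠ 0) (hc : s + a * a - a ≠ 0) :
    ![a, 1 - a, s + a * a - a] ∈ sol 3 s 0 := by
  refine ⟨fun i => by fin_cases i <;> simp [ha, hb, hc], ?_⟩
  rw [Fin.sum_univ_three, Fin.prod_univ_three]
  simp only [Matrix.cons_val_zero, Matrix.cons_val_one, Matrix.head_cons,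
    Matrix.cons_val_two, Matrix.tail_cons]
  have ha' : ((a : ℤ) : ℚ) ≠ 0 := Int.cast_ne_zero.mpr ha
  have hb' : (((1 - a) : ℤ) : ℚ) ≠ 0 := Int.cast_ne_zero.mpr hb
  have hc' : (((s + a * a - a) : ℤ) : ℚ) ≠ 0 := Int.cast_ne_zero.mpr hc
  push_cast at ha' hb' hc' ⊢
  have hc'' : ((s:ℚ) + (a:ℚ)^2 - (a:ℚ)) ≠ 0 := by convert hc' using 1; ring
  field_simp
  ring

lemma sol_three_infinite (s : ℤ) (hs : s ≠ 0) : (sol 3 s 0).Infinite := by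
  refine Set.infinite_of_injective_forall_mem
    (f := fun t : ℕ => ![(t : ℤ) + 2 + |s|, 1 - ((t : ℤ) + 2 + |s|),
      s + ((t : ℤ) + 2 + |s|) * ((t : ℤ) + 2 + |s|) - ((t : ℤ) + 2 + |s|)]) ?_ ?_
  · intro a b hab
    have := congrFun hab 0
    simp at this
    omega
  · intro t
    have habs1 := abs_nonneg s
    have habs2 := le_abs_self s
    have habs3 := neg_abs_le s
    refine aux3 s _ (by omega) (by omega) (by nlinarith)

lemma sol_infinite : ∀ (k : ℕ) (s m : ℤ), s ≠ 0 → |m| ≤ (k : ℤ) → (sol (k+2) s m).Infinite := by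
  intro k
  induction k with
  | zero =>
    intro s m hs hm
    have hm0 : m = 0 := by rw [abs_le] at hm; omega
    subst hm0
    exact sol_two_infinite s hs
  | succ k ih =>
    intro s m hs hm
    rcases lt_trichotomy m 0 with hneg | hzero | hpos
    · have h := ih (-s) (m+1) (neg_ne_zero.mpr hs) (by rw [abs_le] at hm ⊢; push_cast at hm ⊢; omega)
      have h2 := h.image ((Fin.cons_right_injective (α := fun _ : Fin (k+3) => ℤ) (-1)).injOn)
      refine h2.mono ?_
      rintro x ⟨y, hy, rfl⟩
      have := mem_cons_neg hy
      simpa using this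
    · subst hzero
      rcases Nat.eq_zero_or_pos k with rfl | hk
      · exact sol_three_infinite s hs
      · have h := ih s (-1) hs (by rw [abs_le]; omega)
        have h2 := h.image ((Fin.cons_right_injective (α := fun _ : Fin (k+3) => ℤ) 1).injOn)
        refine h2.mono ?_
        rintro x ⟨y, hy, rfl⟩
        have := mem_cons_one hy
        simpa using this
    · have h := ih s (m-1) hs (by rw [abs_le] at hm ⊢; push_cast at hm ⊢; omega)
      have h2 := h.image ((Fin.cons_right_injective (α := fun _ : Fin (k+3) => ℤ) 1).injOn)
      refine h2.mono ?_
      rintro x ⟨y, hy, rfl⟩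
      have := mem_cons_one hy
      simpa using this

lemma sol_pos_infinite (k : ℕ) : (sol (k+2) 1 ((k:ℤ)+1)).Infinite := by
  refine Set.infinite_of_injective_forall_mem
    (f := fun t : ℕ => fun i : Fin (k+2) => if i = 0 then ((t:ℤ)+1) else 1) ?_ ?_
  · intro a b hab
    have := congrFun hab 0
    simp at this
    omega
  · intro t
    have ht : ((t:ℤ)+1 : ℚ) ≠ 0 := by positivity
    refine ⟨fun i => by by_cases h : i = 0 <;> simp [h] <;> omega, ?_⟩
    rw [Fin.sum_univ_succ, Fin.prod_univ_succ]
    simp only [if_pos rfl, Fin.succ_ne_zero, if_neg]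
    push_cast
    simp only [Finset.sum_const, Finset.prod_const, Finset.card_univ, Fintype.card_fin]
    field_simp
    rw [nsmul_eq_mul]; push_cast; ring

lemma sol_neg_infinite (k : ℕ) : (sol (k+2) ((-1)^(k+1)) (-((k:ℤ)+1))).Infinite := by
  refine Set.infinite_of_injective_forall_mem
    (f := fun t : ℕ => fun i : Fin (k+2) => if i = 0 then ((t:ℤ)+1) else -1) ?_ ?_
  · intro a b hab
    have := congrFun hab 0
    simp at this
    omega
  · intro t
    have ht : ((t:ℤ)+1 : ℚ) ≠ 0 := by positivity
    have hneg : ((-1:ℚ))^(k+1) ≠ 0 := by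
      apply pow_ne_zero; norm_num
    refine ⟨fun i => by by_cases h : i = 0 <;> simp [h] <;> omega, ?_⟩
    rw [Fin.sum_univ_succ, Fin.prod_univ_succ]
    simp only [if_pos rfl, Fin.succ_ne_zero, if_neg]
    push_cast
    simp only [Finset.sum_const, Finset.prod_const, Finset.card_univ, Fintype.card_fin]
    rw [show ((-1:ℚ))⁻¹ = -1 by norm_num]
    field_simp
    ring

lemma forward (s m : ℤ) (hs : s ≠ 0) (k : ℕ) (h : (sol (k+2) s m).Infinite) :
    |m| ≤ (k:ℤ) ∨ (m = (k:ℤ)+1 ∧ s = 1) ∨ (m = -((k:ℤ)+1) ∧ s = (-1)^(k+1)) := by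
  set B : ℤ := 2*(1+|s|) with hBdef
  have hBpos : 0 < B := by have := abs_nonneg s; omega
  -- get a solution with a large coordinate
  have hbox : {x : Fin (k+2) → ℤ | ∀ i, |x i| ≤ B}.Finite := by
    refine Set.Finite.subset (Set.Finite.pi (t := fun _ : Fin (k+2) => Set.Icc (-B) B)
      (fun i => Set.finite_Icc _ _)) ?_
    intro x hx i _
    exact Set.mem_Icc.mpr (abs_le.mp (hx i))
  obtain ⟨x, hx, hnot⟩ : ∃ x ∈ sol (k+2) s m, ¬ (∀ i, |x i| ≤ B) := by
    by_contra h'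
    push_neg at h'
    exact h (hbox.subset h')
  push_neg at hnot
  obtain ⟨i₀, hi₀⟩ := hnot
  obtain ⟨h0, he⟩ := hx
  set P : ℚ := ∏ i, (x i : ℚ) with hPdef
  set M : ℚ := |(x i₀ : ℚ)| with hMdef
  have hone : ∀ i, (1:ℚ) ≤ |(x i : ℚ)| := by
    intro i
    have := Int.one_le_abs (h0 i)
    calc (1:ℚ) = ((1:ℤ):ℚ) := by norm_num
    _ ≤ ((|x i| : ℤ) : ℚ) := by exact_mod_cast this
    _ = |(x i : ℚ)| := by push_cast; ring
  have hMB : (B:ℚ) < M := by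
    rw [hMdef]
    calc (B:ℚ) < ((|x i₀| : ℤ) : ℚ) := by exact_mod_cast hi₀
    _ = |(x i₀ : ℚ)| := by push_cast; ring
  have hM0 : (0:ℚ) < M := lt_trans (by exact_mod_cast hBpos) hMB
  have hMP : M ≤ |P| := by
    rw [hPdef, abs_prod]
    have hh : ∏ j, (if j = i₀ then M else 1) ≤ ∏ j, |(x j:ℚ)| := by
      refine Finset.prod_le_prod (fun j _ => ?_) (fun j _ => ?_)
      · split <;> [exact le_of_lt hM0; norm_num]
      · split
        · next hji => rw [hji]
        · exact hone j
    simpa using hh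
  have hP0 : P ≠ 0 := by
    intro hh
    rw [hh, abs_zero] at hMP
    linarith
  have hinv : ∀ i, |((x i : ℚ))⁻¹| ≤ 1 := by
    intro i
    rw [abs_inv]
    exact inv_le_one_of_one_le₀ (hone i)
  have hinv0 : |((x i₀ : ℚ))⁻¹| ≤ 1/M := by
    rw [abs_inv, ← hMdef, one_div]
  have hsP : |(s:ℚ)/P| ≤ |(s:ℚ)|/M := by
    rw [abs_div]
    exact div_le_div_of_nonneg_left (abs_nonneg _) hM0 hMP |>.trans_eq rfl
  have hsmall : (1 + |(s:ℚ)|)/M < 1/2 := by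
    rw [div_lt_iff₀ hM0]
    have : ((1:ℚ) + |(s:ℚ)|) = B/2 := by
      rw [hBdef]; push_cast; ring
    rw [this]
    linarith
  -- Step 1 : |m| ≤ k+1
  have hsum_erase : ∀ i : Fin (k+2), ∑ j ∈ univ.erase i, |((x j : ℚ))⁻¹| ≤ ((k:ℚ)+1) := by
    intro i
    calc ∑ j ∈ univ.erase i, |((x j : ℚ))⁻¹| ≤ (univ.erase i).card • (1:ℚ) :=
          sum_le_card_nsmul _ _ _ (fun j _ => hinv j)
    _ = ((k:ℚ)+1) := by
          rw [card_erase_of_mem (mem_univ i), card_univ, Fintype.card_fin]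
          push_cast; ring
  have hm1 : |m| ≤ (k:ℤ) + 1 := by
    have habs : |(m:ℚ)| < (k:ℚ) + 2 := by
      rw [← he]
      calc |(∑ i, ((x i : ℚ))⁻¹) - (s:ℚ)/P| ≤ |∑ i, ((x i : ℚ))⁻¹| + |(s:ℚ)/P| :=
            abs_sub _ _
      _ ≤ (∑ i, |((x i : ℚ))⁻¹|) + |(s:ℚ)|/M :=
            add_le_add (Finset.abs_sum_le_sum_abs _ _) hsP
      _ = (|((x i₀ : ℚ))⁻¹| + ∑ j ∈ univ.erase i₀, |((x j : ℚ))⁻¹|) + |(s:ℚ)|/M := by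
            rw [Finset.add_sum_erase _ (fun j => |((x j : ℚ))⁻¹|) (mem_univ i₀)]
      _ ≤ (1/M + ((k:ℚ)+1)) + |(s:ℚ)|/M :=
            add_le_add (add_le_add hinv0 (hsum_erase i₀)) le_rfl
      _ = ((k:ℚ)+1) + (1 + |(s:ℚ)|)/M := by ring
      _ < ((k:ℚ)+1) + 1/2 := by linarith [hsmall]
      _ < (k:ℚ) + 2 := by linarith
    have : |m| < (k:ℤ) + 2 := by exact_mod_cast (by push_cast at habs ⊢; exact habs : (|m|:ℚ) < (k:ℚ)+2)
    omega
  rcases le_or_gt (|m|) (k:ℤ) with hle | hgt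
  · exact Or.inl hle
  have hmabs : m = (k:ℤ)+1 ∨ m = -((k:ℤ)+1) := by
    rcases abs_cases m with ⟨h1, _⟩ | ⟨h1, _⟩ <;> omega
  -- common machinery
  have ht0 : ((x i₀ : ℚ)) ≠ 0 := Int.cast_ne_zero.mpr (h0 i₀)
  have hkey : ∀ i : Fin (k+2), ((x i:ℚ))⁻¹ = (m:ℚ) + (s:ℚ)/P - ∑ j ∈ univ.erase i, ((x j:ℚ))⁻¹ := by
    intro i
    have h2 := Finset.add_sum_erase univ (fun j => ((x j:ℚ))⁻¹) (mem_univ i)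
    linarith [he, h2]
  have habserase : ∀ i : Fin (k+2), i ≠ i₀ → |∑ j ∈ univ.erase i, ((x j:ℚ))⁻¹| ≤ (k:ℚ) + 1/M := by
    intro i hi
    have hmem : i₀ ∈ univ.erase i := mem_erase.mpr ⟨(Ne.symm hi), mem_univ _⟩
    calc |∑ j ∈ univ.erase i, ((x j:ℚ))⁻¹| ≤ ∑ j ∈ univ.erase i, |((x j:ℚ))⁻¹| :=
          Finset.abs_sum_le_sum_abs _ _
    _ = |((x i₀:ℚ))⁻¹| + ∑ j ∈ (univ.erase i).erase i₀, |((x j:ℚ))⁻¹| := by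
          rw [Finset.add_sum_erase _ (fun j => |((x j:ℚ))⁻¹|) hmem]
    _ ≤ 1/M + ((univ.erase i).erase i₀).card • (1:ℚ) :=
          add_le_add hinv0 (sum_le_card_nsmul _ _ _ (fun j _ => hinv j))
    _ = (k:ℚ) + 1/M := by
          rw [card_erase_of_mem hmem, card_erase_of_mem (mem_univ i), card_univ,
            Fintype.card_fin]
          push_cast
          ring
  have hspl := abs_le.mp hsP
  have hsplit : 1/M + |(s:ℚ)|/M = (1+|(s:ℚ)|)/M := by ring
  rcases hmabs with hm | hm
  -- case m = k+1
  · have hx1 : ∀ i, i ≠ i₀ → x i = 1 := by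
      intro i hi
      have hb := (abs_le.mp (habserase i hi)).2
      have e := hkey i
      have hmq : (m:ℚ) = (k:ℚ) + 1 := by rw [hm]; push_cast; ring
      have h1 : (1:ℚ)/2 < ((x i:ℚ))⁻¹ := by
        rw [e, hmq]
        linarith [hspl.1]
      have hxpos : 0 < x i := by
        have h2 : (0:ℚ) < ((x i:ℚ))⁻¹ := lt_trans (by norm_num) h1
        have h3 := inv_pos.mp h2
        exact_mod_cast h3
      have hxlt : x i < 2 := by
        by_contra hcon
        push_neg at hcon
        have h4 : (2:ℚ) ≤ ((x i:ℚ)) := by exact_mod_cast hcon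
        have h5 : ((x i:ℚ))⁻¹ ≤ 2⁻¹ := by
          apply inv_anti₀ (by norm_num) h4
        norm_num at h5
        linarith
      omega
    have hsum : ∑ i, ((x i:ℚ))⁻¹ = ((x i₀:ℚ))⁻¹ + ((k:ℚ)+1) := by
      rw [← Finset.add_sum_erase _ (fun j => ((x j:ℚ))⁻¹) (mem_univ i₀)]
      congr 1
      calc ∑ j ∈ univ.erase i₀, ((x j:ℚ))⁻¹ = ∑ j ∈ univ.erase i₀, (1:ℚ) :=
            Finset.sum_congr rfl (fun j hj => by
              rw [hx1 j (mem_erase.mp hj).1]; norm_num)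
      _ = ((k:ℚ)+1) := by
            rw [Finset.sum_const, card_erase_of_mem (mem_univ i₀), card_univ,
              Fintype.card_fin]
            push_cast; ring
    have hprod : P = (x i₀:ℚ) := by
      rw [hPdef, ← Finset.mul_prod_erase _ (fun j => ((x j:ℚ))) (mem_univ i₀)]
      have : ∏ j ∈ univ.erase i₀, ((x j:ℚ)) = 1 := by
        refine Finset.prod_eq_one (fun j hj => ?_)
        rw [hx1 j (mem_erase.mp hj).1]; norm_num
      rw [this, mul_one]
    rw [hsum, hprod] at he
    have hmq : (m:ℚ) = (k:ℚ) + 1 := by rw [hm]; push_cast; ring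
    rw [hmq] at he
    have hs1 : (s:ℚ) = 1 := by
      field_simp at he
      linarith
    exact Or.inr (Or.inl ⟨hm, by exact_mod_cast hs1⟩)
  -- case m = -(k+1)
  · have hx1 : ∀ i, i ≠ i₀ → x i = -1 := by
      intro i hi
      have hb := (abs_le.mp (habserase i hi)).1
      have e := hkey i
      have hmq : (m:ℚ) = -((k:ℚ) + 1) := by rw [hm]; push_cast; ring
      have h1 : ((x i:ℚ))⁻¹ < -(1/2 : ℚ) := by
        rw [e, hmq]
        linarith [hspl.2]
      have hxneg : x i < 0 := by
        have h2 : ((x i:ℚ))⁻¹ < 0 := lt_trans h1 (by norm_num)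
        have h3 := inv_lt_zero.mp h2
        exact_mod_cast h3
      have hxgt : -2 < x i := by
        by_contra hcon
        push_neg at hcon
        have h4 : ((x i:ℚ)) ≤ -2 := by exact_mod_cast hcon
        have h6 : ((x i:ℚ)) ≠ 0 := Int.cast_ne_zero.mpr (h0 i)
        have h7 : ((x i:ℚ)) * ((x i:ℚ))⁻¹ = 1 := mul_inv_cancel₀ h6
        nlinarith [h1, h4, h7]
      omega
    have hsum : ∑ i, ((x i:ℚ))⁻¹ = ((x i₀:ℚ))⁻¹ - ((k:ℚ)+1) := by
      rw [← Finset.add_sum_erase _ (fun j => ((x j:ℚ))⁻¹) (mem_univ i₀)]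
      have h9 : ∑ j ∈ univ.erase i₀, ((x j:ℚ))⁻¹ = ∑ j ∈ univ.erase i₀, (-1:ℚ) :=
        Finset.sum_congr rfl (fun j hj => by
          rw [hx1 j (mem_erase.mp hj).1]; norm_num)
      rw [h9, Finset.sum_const, card_erase_of_mem (mem_univ i₀), card_univ,
        Fintype.card_fin]
      push_cast; ring
    have hprod : P = (x i₀:ℚ) * (-1:ℚ)^(k+1) := by
      rw [hPdef, ← Finset.mul_prod_erase _ (fun j => ((x j:ℚ))) (mem_univ i₀)]
      have h8 : ∏ j ∈ univ.erase i₀, ((x j:ℚ)) = ∏ j ∈ univ.erase i₀, (-1:ℚ) :=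
        Finset.prod_congr rfl (fun j hj => by
          rw [hx1 j (mem_erase.mp hj).1]; norm_num)
      rw [h8, Finset.prod_const, card_erase_of_mem (mem_univ i₀), card_univ,
        Fintype.card_fin]
      norm_num
    rw [hsum, hprod] at he
    have hmq : (m:ℚ) = -((k:ℚ) + 1) := by rw [hm]; push_cast; ring
    rw [hmq] at he
    have he1 : ((-1:ℚ))^(k+1) ≠ 0 := by
      apply pow_ne_zero; norm_num
    have hs1 : (s:ℚ) = ((-1:ℚ))^(k+1) := by
      have h10 : ((x i₀:ℚ))⁻¹ = (s:ℚ)/((x i₀:ℚ) * (-1:ℚ)^(k+1)) := by linarith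
      rw [inv_eq_one_div, div_eq_div_iff ht0 (mul_ne_zero ht0 he1), one_mul] at h10
      have h11 := mul_left_cancel₀ ht0 (h10.trans (mul_comm _ _))
      exact h11.symm
    refine Or.inr (Or.inr ⟨hm, ?_⟩)
    have hfin : ((s:ℤ):ℚ) = (((-1:ℤ)^(k+1) : ℤ) : ℚ) := by push_cast; exact hs1
    exact_mod_cast hfin

/-- **Theorem 6.1.** For `r = 1`, the equation
`(1/x_1 + ⋯ + 1/x_n) - s/(x_1 ⋯ x_n) = m` has infinitely many solutions in
nonzero integers iff (i) `|m| ≤ n - 2`, or (ii) `m = n - 1` and `s = 1`, or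
(iii) `m = -(n-1)` and `s = (-1)^(n-1)`. -/
theorem infinitely_many_solutions_iff_r_one
    (s : ℤ) (hs : s ≠ 0) (m : ℤ) (n : ℕ) (hn : 2 ≤ n) :
    {x : Fin n → ℤ |
        (∀ i, x i ≠ 0) ∧
        (∑ i, ((x i : ℚ))⁻¹) - (s : ℚ) / (∏ i, (x i : ℚ)) = (m : ℚ)}.Infinite ↔
      (|m| ≤ (n : ℤ) - 2 ∨
        (m = (n : ℤ) - 1 ∧ s = 1) ∨
        (m = -((n : ℤ) - 1) ∧ s = (-1) ^ (n - 1))) := by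
  obtain ⟨k, rfl⟩ : ∃ k, n = k + 2 := ⟨n - 2, by omega⟩
  show (sol (k+2) s m).Infinite ↔ _
  constructor
  · intro h
    rcases forward s m hs k h with h1 | h2 | h3
    · left
      have hc : ((k+2:ℕ):ℤ) - 2 = (k:ℤ) := by push_cast; ring
      rw [hc]; exact h1
    · right; left
      refine ⟨?_, h2.2⟩
      have := h2.1
      push_cast
      omega
    · right; right
      refine ⟨?_, ?_⟩
      · have := h3.1
        push_cast
        omega
      · exact h3.2
  · rintro (h1 | ⟨h2, rfl⟩ | ⟨h3, h4⟩)
    · have hm : |m| ≤ (k:ℤ) := by push_cast at h1; omega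
      exact sol_infinite k s m hs hm
    · have hm : m = (k:ℤ)+1 := by push_cast at h2; omega
      rw [hm]
      exact sol_pos_infinite k
    · have hm : m = -((k:ℤ)+1) := by push_cast at h3; omega
      rw [hm, h4]
      exact sol_neg_infinite k
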